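/- Let q be a prime power, n a positive integer, and let C be a cyclic code of length n over F_{q^2}, i.e., an ideal of F_{q^2}[x]/⟨x^n − 1⟩, with generator polynomial g(x) (the unique monic divisor of x^n − 1 whose image generates C), and set h(x) = (x^n − 1)/g(x). Then C ∩ C^{⊥_H} = {0} if and only if gcd(g(x), h†(x)) = 1. -/

import Mathlib

open Polynomial

/-- The reciprocal polynomial `f*(x) = x^(deg f) * f(0)⁻¹ * f(1/x)`. -/
noncomputable def crecip {F : Type*} [Field F] (f : F[X]) : F[X] :=
  C (f.coeff 0)⁻¹ * f.reverse

/-- The conjugate-reciprocal polynomial `f†`, obtained by applying the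
conjugation `a ↦ a ^ q` to each coefficient of `f*`. -/
noncomputable def cdagger {F : Type*} [Field F] (q : ℕ) (f : F[X]) : F[X] :=
  (crecip f).sum fun i a => C (a ^ q) * X ^ i

/-- A polynomial is SCRIM if it is monic, irreducible, and self-conjugate-reciprocal. -/
def IsSCRIM {F : Type*} [Field F] (q : ℕ) (f : F[X]) : Prop :=
  f.Monic ∧ Irreducible f ∧ f = cdagger q f

/-- The set `Ω_{q²,n}` of SCRIM factors of `x^n - 1` over `F = F_{q²}`. -/
def scrimFactors (F : Type*) [Field F] (q n : ℕ) : Set F[X] :=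
  {f | IsSCRIM q f ∧ f ∣ X ^ n - 1}

/-- The codewords of a cyclic code, viewed as the polynomials of degree `< n`
in the ideal `C` of `F[x]` corresponding to the ideal `C` of `F[x]/⟨x^n - 1⟩`. -/
def codewords {F : Type*} [Field F] (C : Ideal F[X]) (n : ℕ) : Set F[X] :=
  {f | f ∈ C ∧ f.degree < (n : WithBot ℕ)}

/-- The Hermitian dual code `C^⊥H`, as a set of polynomials of degree `< n`. -/
def hermDual {F : Type*} [Field F] (q : ℕ) (C : Ideal F[X]) (n : ℕ) : Set F[X] :=
  {u | u.degree < (n : WithBot ℕ) ∧ ∀ v ∈ C, v.degree < (n : WithBot ℕ) →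
      ∑ i ∈ Finset.range n, u.coeff i * (v.coeff i) ^ q = 0}

private lemma natDegree_reflect_le' {F : Type*} [Semiring F] {f : F[X]} {N : ℕ}
    (hf : f.natDegree ≤ N) : (reflect N f).natDegree ≤ N := by
  rw [natDegree_le_iff_coeff_eq_zero]
  intro i hi
  rw [coeff_reflect, revAt_eq_self_of_lt hi]
  exact coeff_eq_zero_of_natDegree_lt (lt_of_le_of_lt hf hi)

private lemma pairing' {F : Type*} [Field F] {n : ℕ} (hn : 0 < n) (σ : F →+* F) (u v : F[X]) :
    ∑ i ∈ Finset.range n, u.coeff i * σ (v.coeff i)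
      = (u * reflect (n - 1) (v.map σ)).coeff (n - 1) := by
  rw [coeff_mul, Finset.Nat.sum_antidiagonal_eq_sum_range_succ_mk]
  have h1 : (n - 1).succ = n := by omega
  rw [h1]
  apply Finset.sum_congr rfl
  intro i hi
  have hi' : i ≤ n - 1 := by have := Finset.mem_range.1 hi; omega
  have h2 : n - 1 - (n - 1 - i) = i := by omega
  rw [coeff_reflect, revAt_le (Nat.sub_le _ _), h2, coeff_map]

private lemma cdagger_eq' {F : Type*} [Field F] (q : ℕ) (σ : F →+* F) (hσ : ∀ x, σ x = x ^ q)
    (f : F[X]) : cdagger q f = (crecip f).map σ := by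
  rw [cdagger, show (crecip f).map σ = eval₂ (C.comp σ) X (crecip f) from rfl, eval₂_eq_sum]
  simp only [RingHom.coe_comp, Function.comp_apply, hσ]

private lemma key' {F : Type*} [Field F] {n : ℕ} (hn : 0 < n) (σ : F →+* F)
    {g h : F[X]} (hg : g.Monic) (hh : X ^ n - 1 = g * h) (u : F[X])
    (hu : u.degree < (n : WithBot ℕ)) :
    (∀ v : F[X], g ∣ v → v.degree < (n : WithBot ℕ) →
        ∑ i ∈ Finset.range n, u.coeff i * σ (v.coeff i) = 0)
      ↔ (h.map σ).reverse ∣ u := by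
  -- basic nonvanishing facts
  have hXn : (X ^ n - 1 : F[X]) ≠ 0 := by
    have := X_pow_sub_C_ne_zero hn (1 : F); rwa [map_one] at this
  have hXdeg : (X ^ n - 1 : F[X]).natDegree = n := by
    have : ((X : F[X]) ^ n - C 1).natDegree = n := natDegree_X_pow_sub_C
    rwa [map_one] at this
  have hg0 : g ≠ 0 := hg.ne_zero
  have hh0 : h ≠ 0 := fun h0 => hXn (by rw [hh, h0, mul_zero])
  set k := g.natDegree with hk
  set l := h.natDegree with hl
  have hkl : k + l = n := by rw [hk, hl, ← natDegree_mul hg0 hh0, ← hh, hXdeg]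
  have hconst : g.coeff 0 * h.coeff 0 = -1 := by
    have h2 := congrArg (fun f : F[X] => f.coeff 0) hh
    simp only [coeff_sub, coeff_X_pow, coeff_one, mul_coeff_zero, if_neg (show ¬(0 = n) by omega)] at h2
    simpa using h2.symm
  have hgc : g.coeff 0 ≠ 0 := by
    intro e; rw [e, zero_mul] at hconst; exact one_ne_zero (neg_eq_zero.1 hconst.symm)
  have hhc : h.coeff 0 ≠ 0 := by
    intro e; rw [e, mul_zero] at hconst; exact one_ne_zero (neg_eq_zero.1 hconst.symm)
  set W := g.map σ with hW
  set G := W.reverse with hG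
  set H' := (h.map σ).reverse with hH'
  have hWdeg : W.natDegree = k := natDegree_map σ
  have hWc : W.coeff 0 ≠ 0 := by
    rw [hW, coeff_map]; exact fun e => hgc (σ.injective (by rwa [map_zero]))
  have hGdeg : G.natDegree = k := by
    rw [hG, reverse_natDegree, hWdeg, natTrailingDegree_eq_zero.2 (Or.inr hWc), tsub_zero]
  have hGk : G.coeff k ≠ 0 := by
    rw [hG, coeff_reverse, hWdeg, revAt_le le_rfl, tsub_self]; exact hWc
  have hG0 : G ≠ 0 := fun e => hGk (by simp [e])
  have hGdegree : G.degree = (k : WithBot ℕ) := by rw [degree_eq_natDegree hG0, hGdeg]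
  have hMdeg : (h.map σ).natDegree = l := natDegree_map σ
  have hMc : (h.map σ).coeff 0 ≠ 0 := by
    rw [coeff_map]; exact fun e => hhc (σ.injective (by rwa [map_zero]))
  have hH'deg : H'.natDegree = l := by
    rw [hH', reverse_natDegree, hMdeg, natTrailingDegree_eq_zero.2 (Or.inr hMc), tsub_zero]
  have hH'l : H'.coeff l ≠ 0 := by
    rw [hH', coeff_reverse, hMdeg, revAt_le le_rfl, tsub_self]; exact hMc
  have hH'0 : H' ≠ 0 := fun e => hH'l (by simp [e])
  have hH'degree : H'.degree = (l : WithBot ℕ) := by rw [degree_eq_natDegree hH'0, hH'deg]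
  have hrev1 : (X ^ n - 1 : F[X]).reverse = 1 - X ^ n := by
    rw [reverse, hXdeg]
    have e1 : (X ^ n - 1 : F[X]) = X ^ n + C (-1) * X ^ 0 := by simp; ring
    rw [e1, reflect_add, reflect_monomial, reflect_C_mul_X_pow, revAt_le le_rfl,
      revAt_le (Nat.zero_le n), tsub_self, tsub_zero]
    simp; ring
  have hGH : G * H' = 1 - X ^ n := by
    rw [hG, hH', hW, ← reverse_mul_of_domain, ← Polynomial.map_mul, ← hh]
    have : ((X : F[X]) ^ n - 1).map σ = X ^ n - 1 := by
      simp [Polynomial.map_sub, Polynomial.map_pow]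
    rw [this, hrev1]
  constructor
  · intro hsum
    by_cases hu0 : u = 0
    · exact hu0 ▸ dvd_zero _
    have hundeg : u.natDegree ≤ n - 1 := by
      have := (natDegree_lt_iff_degree_lt hu0).2 hu; omega
    by_cases hl0 : l = 0
    · exact (isUnit_iff_degree_eq_zero.2 (by rw [hH'degree, hl0]; rfl)).dvd
    have hcoeff : ∀ j, j < l → (u * G).coeff (k + j) = 0 := by
      intro j hj
      have hxj : (X : F[X]) ^ j ≠ 0 := pow_ne_zero _ X_ne_zero
      have hgj0 : g * X ^ j ≠ 0 := mul_ne_zero hg0 hxj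
      have hdeg : (g * X ^ j).degree < (n : WithBot ℕ) := by
        rw [← natDegree_lt_iff_degree_lt hgj0, natDegree_mul hg0 hxj, natDegree_X_pow]
        omega
      have h0 := hsum (g * X ^ j) ⟨X ^ j, rfl⟩ hdeg
      rw [pairing' hn σ] at h0
      rw [Polynomial.map_mul, Polynomial.map_pow, map_X] at h0
      have e1 : n - 1 = k + (l - 1) := by omega
      rw [e1, reflect_mul _ _ (le_of_eq hWdeg) (by rw [natDegree_X_pow]; omega),
        reflect_monomial, revAt_le (by omega : j ≤ l - 1)] at h0
      have e2 : reflect k W = G := by rw [hG, reverse, hWdeg]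
      rw [e2, ← mul_assoc, coeff_mul_X_pow', if_pos (by omega)] at h0
      have e3 : k + (l - 1) - (l - 1 - j) = k + j := by omega
      rwa [e3] at h0
    by_cases hk0 : k = 0
    · have hUG : u * G = 0 := by
        apply Polynomial.ext
        intro i
        rw [coeff_zero]
        rcases lt_or_ge i n with hin | hin
        · have := hcoeff i (by omega); rwa [hk0, zero_add] at this
        · exact coeff_eq_zero_of_natDegree_lt (lt_of_le_of_lt natDegree_mul_le (by omega))
      rcases mul_eq_zero.1 hUG with e | e
      · exact e ▸ dvd_zero _
      · exact absurd e hG0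
    set P := u * G with hP
    have hmonic : ((X : F[X]) ^ n).Monic := monic_X_pow n
    set Q := P /ₘ (X ^ n) with hQ
    set Rm := P %ₘ (X ^ n) with hRm
    have hPdecomp : Rm + X ^ n * Q = P := modByMonic_add_div P (X ^ n)
    have hRmdeg : Rm.degree < (n : WithBot ℕ) := by
      have := degree_modByMonic_lt P hmonic
      rwa [degree_X_pow] at this
    have hRcoeff : ∀ i : ℕ, k ≤ i → Rm.coeff i = 0 := by
      intro i hi
      rcases lt_or_ge i n with hin | hin
      · have e : Rm = P - X ^ n * Q := by rw [← hPdecomp]; ring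
        rw [e, coeff_sub, X_pow_mul, coeff_mul_X_pow', if_neg (by omega)]
        have h5 := hcoeff (i - k) (by omega)
        rw [show k + (i - k) = i by omega] at h5
        simp [h5]
      · exact coeff_eq_zero_of_degree_lt
          (lt_of_lt_of_le hRmdeg (by exact_mod_cast Nat.cast_le.2 hin))
    have hRmdegk : Rm.degree < (k : WithBot ℕ) :=
      (degree_lt_iff_coeff_zero _ _).2 fun m hm => hRcoeff m hm
    have hPdeg : P.natDegree ≤ n - 1 + k := by
      rw [hP]
      exact le_trans natDegree_mul_le (by omega)
    have hQdeg : Q.natDegree ≤ k - 1 := by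
      rw [hQ, natDegree_divByMonic _ hmonic, natDegree_X_pow]
      omega
    have hkey : G * (u + H' * Q) = Rm + Q := by
      have h1 : Rm + X ^ n * Q = u * G := by rw [hPdecomp, hP]
      linear_combination (-1 : F[X]) * h1 + Q * hGH
    have hQdegree : Q.degree < (k : WithBot ℕ) := by
      rcases eq_or_ne Q 0 with e | e
      · rw [e, degree_zero]; exact WithBot.bot_lt_coe _
      · rw [← natDegree_lt_iff_degree_lt e]; omega
    have hsum0 : u + H' * Q = 0 := by
      by_contra hne
      have h2 : (k : WithBot ℕ) ≤ (G * (u + H' * Q)).degree := by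
        rw [degree_mul, hGdegree]
        have h6 : (0 : WithBot ℕ) ≤ (u + H' * Q).degree := zero_le_degree_iff.2 hne
        calc (k : WithBot ℕ) = (k : WithBot ℕ) + 0 := by rw [add_zero]
          _ ≤ (k : WithBot ℕ) + (u + H' * Q).degree := add_le_add le_rfl h6
      rw [hkey] at h2
      have h3 : (Rm + Q).degree < (k : WithBot ℕ) :=
        lt_of_le_of_lt (degree_add_le _ _) (max_lt hRmdegk hQdegree)
      exact absurd h2 (not_le.2 h3)
    exact ⟨-Q, by linear_combination hsum0⟩
  · rintro ⟨s, rfl⟩ v hv hdv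
    obtain ⟨m, rfl⟩ := hv
    by_cases hm0 : m = 0
    · simp [hm0]
    by_cases hs0 : s = 0
    · simp [hs0]
    have hgm0 : g * m ≠ 0 := mul_ne_zero hg0 hm0
    have hmdeg : m.natDegree ≤ l - 1 ∧ 1 ≤ l := by
      have h1 := (natDegree_lt_iff_degree_lt hgm0).2 hdv
      rw [natDegree_mul hg0 hm0] at h1
      omega
    obtain ⟨hm1, hl1⟩ := hmdeg
    have hsdeg : s.natDegree ≤ k - 1 ∧ 1 ≤ k := by
      have hne : H' * s ≠ 0 := mul_ne_zero hH'0 hs0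
      have h1 := (natDegree_lt_iff_degree_lt hne).2 hu
      rw [natDegree_mul hH'0 hs0, hH'deg] at h1
      omega
    obtain ⟨hs1, hk1⟩ := hsdeg
    rw [pairing' hn σ, Polynomial.map_mul]
    have e1 : n - 1 = k + (l - 1) := by omega
    rw [e1, reflect_mul _ _ (le_of_eq hWdeg) (by rw [natDegree_map σ]; omega)]
    set R := reflect (l - 1) (m.map σ) with hR
    have e2 : reflect k W = G := by rw [hG, reverse, hWdeg]
    rw [e2]
    have e3 : H' * s * (G * R) = s * R - s * R * X ^ n := by
      linear_combination (s * R) * hGH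
    rw [e3, coeff_sub, coeff_mul_X_pow', if_neg (by omega)]
    have h4 : (s * R).natDegree < k + (l - 1) := by
      have h7 : R.natDegree ≤ l - 1 :=
        natDegree_reflect_le' (by rw [natDegree_map σ]; omega)
      have h8 : (s * R).natDegree ≤ s.natDegree + R.natDegree := natDegree_mul_le
      omega
    rw [coeff_eq_zero_of_natDegree_lt h4, sub_zero]


theorem stmt14 {q n : ℕ} (hq : IsPrimePow q)
    {F : Type*} [Field F] [Fintype F] (hF : Fintype.card F = q ^ 2)
    (hn : 0 < n) (C : Ideal F[X]) (g h : F[X])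
    (hg : g.Monic) (hgd : g ∣ X ^ n - 1) (hC : C = Ideal.span {g})
    (hh : X ^ n - 1 = g * h) :
    codewords C n ∩ hermDual q C n = {0} ↔ IsCoprime g (cdagger q h) := by
  classical
  obtain ⟨p, e, hp, he, rfl⟩ := hq
  have hpp : p.Prime := hp.nat_prime
  haveI : Fact p.Prime := ⟨hpp⟩
  haveI hchar : CharP F p := by
    haveI := ringChar.charP F
    obtain ⟨d, hprime, hcard⟩ := FiniteField.card F (ringChar F)
    have hcards : Fintype.card F = p ^ (2 * e) := by rw [hF]; ring
    have h1 : ringChar F ∣ p ^ (2 * e) := by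
      rw [hcards] at hcard
      exact hcard ▸ dvd_pow_self (ringChar F) d.pos.ne'
    have h2 : ringChar F = p :=
      (Nat.prime_dvd_prime_iff_eq hprime hpp).1 (hprime.dvd_of_dvd_pow h1)
    exact h2 ▸ ringChar.charP F
  set σ : F →+* F := iterateFrobenius F p e with hσdef
  have hσ : ∀ x : F, σ x = x ^ p ^ e := fun x => iterateFrobenius_def p e x
  -- basic facts
  have hXn : (X ^ n - 1 : F[X]) ≠ 0 := by
    have := X_pow_sub_C_ne_zero hn (1 : F); rwa [map_one] at this
  have hg0 : g ≠ 0 := hg.ne_zero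
  have hh0 : h ≠ 0 := fun h0 => hXn (by rw [hh, h0, mul_zero])
  have hXdeg : (X ^ n - 1 : F[X]).natDegree = n := by
    have : ((X : F[X]) ^ n - Polynomial.C 1).natDegree = n := natDegree_X_pow_sub_C
    rwa [map_one] at this
  have hkl : g.natDegree + h.natDegree = n := by rw [← natDegree_mul hg0 hh0, ← hh, hXdeg]
  have hconst : g.coeff 0 * h.coeff 0 = -1 := by
    have h2 := congrArg (fun f : F[X] => f.coeff 0) hh
    simp only [coeff_sub, coeff_X_pow, coeff_one, mul_coeff_zero,
      if_neg (show ¬(0 = n) by omega)] at h2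
    simpa using h2.symm
  have hhc : h.coeff 0 ≠ 0 := by
    intro e0; rw [e0, mul_zero] at hconst; exact one_ne_zero (neg_eq_zero.1 hconst.symm)
  set H' := (h.map σ).reverse with hH'
  have hMdeg : (h.map σ).natDegree = h.natDegree := natDegree_map σ
  have hMc : (h.map σ).coeff 0 ≠ 0 := by
    rw [coeff_map]; exact fun e0 => hhc (σ.injective (by rwa [map_zero]))
  have hH'deg : H'.natDegree = h.natDegree := by
    rw [hH', reverse_natDegree, hMdeg, natTrailingDegree_eq_zero.2 (Or.inr hMc), tsub_zero]
  have hH'l : H'.coeff h.natDegree ≠ 0 := by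
    rw [hH', coeff_reverse, hMdeg, revAt_le le_rfl, tsub_self]; exact hMc
  have hH'0 : H' ≠ 0 := fun e0 => hH'l (by simp [e0])
  -- cdagger is a unit multiple of H'
  have hσc : σ (h.coeff 0) ≠ 0 := fun e0 => hhc (σ.injective (by rwa [map_zero]))
  have hdag : cdagger (p ^ e) h = Polynomial.C ((σ (h.coeff 0))⁻¹) * H' := by
    rw [cdagger_eq' _ σ hσ, crecip, Polynomial.map_mul, map_C, map_inv₀]
    congr 1
    rw [hH', reverse, reverse, natDegree_map σ, reflect_map]
  have hunit : IsUnit (Polynomial.C ((σ (h.coeff 0))⁻¹) : F[X]) :=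
    isUnit_C.2 (isUnit_iff_ne_zero.2 (inv_ne_zero hσc))
  have hcop_iff : IsCoprime g (cdagger (p ^ e) h) ↔ IsCoprime g H' := by
    rw [hdag]; exact isCoprime_mul_unit_left_right hunit _ _
  -- the key characterization of membership in the Hermitian dual
  have hkey : ∀ u : F[X], u.degree < (n : WithBot ℕ) →
      ((∀ v ∈ C, v.degree < (n : WithBot ℕ) →
          ∑ i ∈ Finset.range n, u.coeff i * (v.coeff i) ^ p ^ e = 0) ↔ H' ∣ u) := by
    intro u hu
    rw [hH', ← key' hn σ hg hh u hu]
    apply forall_congr'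
    intro v
    rw [hC, Ideal.mem_span_singleton]
    simp only [hσ]
  constructor
  · intro hset
    rw [hcop_iff]
    by_contra hncop
    set d := EuclideanDomain.gcd g H' with hd
    have hdg : d ∣ g := EuclideanDomain.gcd_dvd_left g H'
    have hdH : d ∣ H' := EuclideanDomain.gcd_dvd_right g H'
    have hd0 : d ≠ 0 := fun e0 => hg0 (EuclideanDomain.gcd_eq_zero_iff.1 e0).1
    have hdnu : ¬ IsUnit d := fun hu => hncop (EuclideanDomain.gcd_isUnit_iff.1 hu)
    have hddeg : 1 ≤ d.natDegree := by
      by_contra hlt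
      push_neg at hlt
      have hdz : d.natDegree = 0 := by omega
      exact hdnu (isUnit_iff_degree_eq_zero.2
        (by rw [degree_eq_natDegree hd0, hdz, Nat.cast_zero]))
    obtain ⟨e', hedvd⟩ := hdH
    have he'0 : e' ≠ 0 := fun e0 => hH'0 (by rw [hedvd, e0, mul_zero])
    set u := g * e' with hu
    have hu0 : u ≠ 0 := mul_ne_zero hg0 he'0
    have hde' : d.natDegree + e'.natDegree = h.natDegree := by
      rw [← hH'deg, hedvd, natDegree_mul hd0 he'0]
    have hudeg : u.degree < (n : WithBot ℕ) := by
      rw [← natDegree_lt_iff_degree_lt hu0, hu, natDegree_mul hg0 he'0]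
      omega
    have humem : u ∈ codewords C n ∩ hermDual (p ^ e) C n := by
      refine ⟨⟨by rw [hC]; exact Ideal.mem_span_singleton.2 ⟨e', rfl⟩, hudeg⟩, hudeg, ?_⟩
      have hH'u : H' ∣ u := by
        obtain ⟨t, ht⟩ := hdg
        exact ⟨t, by rw [hu, hedvd, ht]; ring⟩
      exact (hkey u hudeg).2 hH'u
    rw [hset] at humem
    exact hu0 (Set.mem_singleton_iff.1 humem)
  · intro hcop
    have hcop' : IsCoprime g H' := hcop_iff.1 hcop
    apply Set.eq_singleton_iff_unique_mem.2
    constructor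
    · exact ⟨⟨C.zero_mem, by rw [degree_zero]; exact WithBot.bot_lt_coe _⟩,
        by rw [degree_zero]; exact WithBot.bot_lt_coe _,
        fun v _ _ => by simp⟩
    · rintro u ⟨⟨humem, hudeg⟩, -, hdualsum⟩
      have hgu : g ∣ u := by rw [hC, Ideal.mem_span_singleton] at humem; exact humem
      have hH'u : H' ∣ u := (hkey u hudeg).1 hdualsum
      by_contra hne
      have hdvd : g * H' ∣ u := hcop'.mul_dvd hgu hH'u
      have hle := degree_le_of_dvd hdvd hne
      have hdeg : (g * H').degree = (n : WithBot ℕ) := by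
        rw [degree_mul, degree_eq_natDegree hg0, degree_eq_natDegree hH'0, hH'deg,
          ← Nat.cast_add, hkl]
      rw [hdeg] at hle
      exact absurd hudeg (not_lt.2 hle)
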